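/- Let D⊆F₄⁺ be a non-singular rook placement, let β₀∈D, and let ξ₁, ξ₂ : D→ℂ∖{0} be maps with ξ₁(β₀)≠ξ₂(β₀). Assume there exists a simple root α₀∈{α₁,α₂,α₃,α₄} such that (α₀,β₀)≠0 and (α₀,β)=0 for every β∈D∖{β₀} with β≮β₀. Then Ω_{D,ξ₁} ≠ Ω_{D,ξ₂}. -/

import Mathlib

open scoped RealInnerProductSpace

/-- The standard basis vectors `ε₁, ε₂, ε₃, ε₄` of `ℝ⁴` (indexed by `Fin 4`). -/
noncomputable def eps (i : Fin 4) : EuclideanSpace ℝ (Fin 4) := EuclideanSpace.single i 1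

/-- The set of positive roots of the root system `F₄`:
`{εᵢ} ∪ {εᵢ−εⱼ, εᵢ+εⱼ : i<j} ∪ {(ε₁±ε₂±ε₃±ε₄)/2}`. -/
noncomputable def F4pos : Set (EuclideanSpace ℝ (Fin 4)) :=
  {v | (∃ i, v = eps i) ∨
       (∃ i j : Fin 4, i < j ∧ (v = eps i - eps j ∨ v = eps i + eps j)) ∨
       (∃ s : Fin 4 → ℝ, s 0 = 1 ∧ (∀ k, s k = 1 ∨ s k = -1) ∧
          v = (1/2 : ℝ) • ∑ k, s k • eps k)}

/-- The simple roots `α₁ = ε₂−ε₃`, `α₂ = ε₃−ε₄`, `α₃ = ε₄`, `α₄ = (ε₁−ε₂−ε₃−ε₄)/2` of `F₄`. -/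
noncomputable def sroot : Fin 4 → EuclideanSpace ℝ (Fin 4) :=
  ![eps 1 - eps 2, eps 2 - eps 3, eps 3, (1/2 : ℝ) • (eps 0 - eps 1 - eps 2 - eps 3)]

/-- The full root system `F₄ = F₄⁺ ∪ (−F₄⁺)`. -/
def F4all : Set (EuclideanSpace ℝ (Fin 4)) := {v | v ∈ F4pos ∨ -v ∈ F4pos}

/-- The exponential of a (nilpotent) endomorphism, as a finite sum. -/
noncomputable def expNil {M : Type*} [AddCommGroup M] [Module ℂ M] (A : Module.End ℂ M) :
    Module.End ℂ M :=
  ∑ k ∈ Finset.range (nilpotencyClass A), (k.factorial : ℂ)⁻¹ • A ^ k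

/-- The coadjoint orbit of a linear form `f ∈ 𝔫*`: all `f ∘ exp(−ad x)`, `x ∈ 𝔫`. -/
noncomputable def orbitOf {n : Type*} [LieRing n] [LieAlgebra ℂ n] (f : Module.Dual ℂ n) :
    Set (Module.Dual ℂ n) :=
  {lam | ∃ x : n, lam = f.comp (expNil (-(LieAlgebra.ad ℂ n x)))}

/-- `x ≤ y` iff `y − x` is a (possibly empty) sum of positive roots of `F₄`. -/
def rootLE (x y : EuclideanSpace ℝ (Fin 4)) : Prop :=
  ∃ M : Multiset (EuclideanSpace ℝ (Fin 4)), (∀ g ∈ M, g ∈ F4pos) ∧ y - x = M.sum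

/-- `x < y` iff `x ≤ y` and `x ≠ y`. -/
def rootLT (x y : EuclideanSpace ℝ (Fin 4)) : Prop := rootLE x y ∧ x ≠ y

namespace Stmt16Aux

noncomputable abbrev E4 := EuclideanSpace ℝ (Fin 4)

/-- A linear functional positive on all positive roots. -/
noncomputable def phi (v : E4) : ℝ := 8 * v 0 + 3 * v 1 + 2 * v 2 + v 3

lemma phi_add (u v : E4) : phi (u + v) = phi u + phi v := by
  simp [phi, PiLp.add_apply]; ring

lemma phi_neg (v : E4) : phi (-v) = - phi v := by
  simp [phi, PiLp.neg_apply]; ring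

lemma phi_zero : phi 0 = 0 := by simp [phi]

lemma phi_sub (u v : E4) : phi (u - v) = phi u - phi v := by
  simp [phi, PiLp.sub_apply]; ring

lemma eps_apply (i j : Fin 4) : eps i j = if j = i then (1:ℝ) else 0 := by
  simp [eps, EuclideanSpace.single_apply]

lemma fv0 : ((0 : Fin 4) : ℕ) = 0 := rfl
lemma fv1 : ((1 : Fin 4) : ℕ) = 1 := rfl
lemma fv2 : ((2 : Fin 4) : ℕ) = 2 := rfl
lemma fv3 : ((3 : Fin 4) : ℕ) = 3 := rfl

lemma phi_pos {v : E4} (hv : v ∈ F4pos) : 0 < phi v := by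
  rcases hv with ⟨i, rfl⟩ | ⟨i, j, hij, h | h⟩ | ⟨s, hs0, hs, rfl⟩
  · fin_cases i <;> simp [phi, eps_apply, Fin.ext_iff, fv0, fv1, fv2, fv3]
  · subst h; fin_cases i <;> fin_cases j <;>
      simp_all [phi, PiLp.sub_apply, eps_apply, Fin.ext_iff, fv0, fv1, fv2, fv3] <;> norm_num
  · subst h; fin_cases i <;> fin_cases j <;>
      simp_all [phi, PiLp.add_apply, eps_apply, Fin.ext_iff, fv0, fv1, fv2, fv3] <;> norm_num
  · have hv : ∀ j : Fin 4, ((1/2 : ℝ) • ∑ k, s k • eps k) j = s j / 2 := by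
      intro j
      fin_cases j <;>
        simp [PiLp.smul_apply, Fin.sum_univ_four, PiLp.add_apply, eps_apply, smul_eq_mul,
          Fin.ext_iff, fv0, fv1, fv2, fv3] <;> ring
    have h1 := hs 1; have h2 := hs 2; have h3 := hs 3
    simp only [phi, hv, hs0]
    rcases h1 with h1 | h1 <;> rcases h2 with h2 | h2 <;> rcases h3 with h3 | h3 <;>
      rw [h1, h2, h3] <;> norm_num

lemma phi_msum {M : Multiset E4} (h : ∀ g ∈ M, g ∈ F4pos) : 0 ≤ phi M.sum := by
  induction M using Multiset.induction with
  | empty => simp [phi_zero]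
  | cons a M ih =>
    rw [Multiset.sum_cons, phi_add]
    have h1 := phi_pos (h a (Multiset.mem_cons_self a M))
    have h2 := ih (fun g hg => h g (Multiset.mem_cons_of_mem hg))
    linarith

lemma phi_msum_pos {M : Multiset E4} (h : ∀ g ∈ M, g ∈ F4pos) (hM : M.sum ≠ 0) :
    0 < phi M.sum := by
  induction M using Multiset.induction with
  | empty => simp at hM
  | cons a M ih =>
    rw [Multiset.sum_cons, phi_add]
    have h1 := phi_pos (h a (Multiset.mem_cons_self a M))
    have h2 := phi_msum (fun g hg => h g (Multiset.mem_cons_of_mem hg))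
    linarith

lemma rootLT_phi {x y : E4} (h : rootLT x y) : phi x < phi y := by
  obtain ⟨⟨M, hM, hsum⟩, hne⟩ := h
  have h0 : M.sum ≠ 0 := by rw [← hsum]; exact sub_ne_zero.mpr (Ne.symm hne)
  have := phi_msum_pos hM h0
  rw [← hsum, phi_sub] at this; linarith

lemma rootLT_asymm {x y : E4} (h : rootLT x y) : ¬ rootLT y x := by
  intro h'
  have := rootLT_phi h; have := rootLT_phi h'; linarith

lemma F4pos_sum_ne_zero {x y : E4} (hx : x ∈ F4pos) (hy : y ∈ F4pos) : x + y ≠ 0 := by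
  intro hc
  have : phi (x + y) = 0 := by rw [hc, phi_zero]
  rw [phi_add] at this
  have := phi_pos hx; have := phi_pos hy; linarith

lemma F4pos_of_mem_all {x y : E4} (hx : x ∈ F4pos) (hy : y ∈ F4pos)
    (h : x + y ∈ F4all) : x + y ∈ F4pos := by
  rcases h with h | h
  · exact h
  · exfalso
    have h1 := phi_pos h
    rw [phi_neg, phi_add] at h1
    have := phi_pos hx; have := phi_pos hy; linarith

lemma rootLT_add_left {x γ : E4} (hγ : γ ∈ F4pos) : rootLT x (γ + x) := by
  refine ⟨⟨{γ}, by simpa using hγ, by simp⟩, fun hc => ?_⟩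
  have : phi x = phi (γ + x) := by rw [← hc]
  rw [phi_add] at this
  have := phi_pos hγ; linarith

lemma rootLT_trans_add {x y γ : E4} (hγ : γ ∈ F4pos) (h : rootLT x y) :
    rootLT x (γ + y) := by
  obtain ⟨⟨M, hM, hsum⟩, hne⟩ := h
  refine ⟨⟨γ ::ₘ M, ?_, ?_⟩, fun hc => ?_⟩
  · intro g hg
    rcases Multiset.mem_cons.mp hg with rfl | hg
    · exact hγ
    · exact hM g hg
  · rw [Multiset.sum_cons, ← hsum]; abel
  · have h1 : phi x < phi y := rootLT_phi ⟨⟨M, hM, hsum⟩, hne⟩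
    have h2 : phi x = phi γ + phi y := by rw [hc, phi_add]
    have := phi_pos hγ; linarith

section ExpRing

variable {A : Type*} [Ring A] [Algebra ℂ A]

lemma coeff_eq {i n : ℕ} (h : i ≤ n) :
    (n.factorial : ℂ)⁻¹ * (n.choose i) = (i.factorial : ℂ)⁻¹ * ((n - i).factorial : ℂ)⁻¹ := by
  have key := Nat.choose_mul_factorial_mul_factorial h
  have h1 : (i.factorial : ℂ) ≠ 0 := Nat.cast_ne_zero.mpr (Nat.factorial_ne_zero i)
  have h2 : ((n - i).factorial : ℂ) ≠ 0 := Nat.cast_ne_zero.mpr (Nat.factorial_ne_zero _)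
  have h3 : (n.factorial : ℂ) ≠ 0 := Nat.cast_ne_zero.mpr (Nat.factorial_ne_zero n)
  have key' : ((n.choose i : ℂ)) * (i.factorial : ℂ) * ((n - i).factorial : ℂ)
      = (n.factorial : ℂ) := by exact_mod_cast congrArg (Nat.cast : ℕ → ℂ) key
  field_simp
  linear_combination key'

/-- The commutator operator `T ↦ T*B - B*T`. -/
noncomputable def opK (B : A) : Module.End ℂ A :=
  LinearMap.mulRight ℂ B - LinearMap.mulLeft ℂ B

omit [Algebra ℂ A] in
lemma pow_vanish {B : A} {p : ℕ} (hB : B ^ p = 0) {j : ℕ} (hj : p ≤ j) : B ^ j = 0 := by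
  calc B ^ j = B ^ p * B ^ (j - p) := by rw [← pow_add]; congr 1; omega
  _ = 0 := by rw [hB, zero_mul]

lemma opK_pow_vanish {B T : A} {p : ℕ} (hB : B ^ p = 0) {k : ℕ} (hk : 2 * p ≤ k) :
    ((opK B) ^ k) T = 0 := by
  have hcom : Commute (LinearMap.mulRight ℂ B) (-(LinearMap.mulLeft ℂ B)) :=
    ((LinearMap.commute_mulLeft_right (R := ℂ) B B).symm).neg_right
  have hexp : (opK B) ^ k
      = ∑ i ∈ Finset.range (k + 1), (LinearMap.mulRight ℂ B) ^ i *
          (-(LinearMap.mulLeft ℂ B)) ^ (k - i) * (k.choose i : Module.End ℂ A) := by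
    rw [opK, sub_eq_add_neg, hcom.add_pow]
  rw [hexp]
  rw [LinearMap.sum_apply]
  apply Finset.sum_eq_zero
  intro i hi
  have : ((LinearMap.mulRight ℂ B) ^ i * (-(LinearMap.mulLeft ℂ B)) ^ (k - i) *
      (k.choose i : Module.End ℂ A)) T
      = ((LinearMap.mulRight ℂ B) ^ i) (((-(LinearMap.mulLeft ℂ B)) ^ (k - i))
          ((k.choose i : ℕ) • T)) := by
    rw [Module.End.mul_apply, Module.End.mul_apply, Module.End.natCast_apply]
  rw [this]
  rcases le_or_gt p i with hpi | hpi
  · -- B ^ i = 0, mulRight kills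
    rw [LinearMap.pow_mulRight, LinearMap.mulRight_apply, pow_vanish hB hpi, mul_zero]
  · -- k - i ≥ p
    have hki : p ≤ k - i := by omega
    rw [show (-(LinearMap.mulLeft ℂ B)) ^ (k - i) = (-1) ^ (k - i) * (LinearMap.mulLeft ℂ B) ^ (k - i)
      from neg_pow (R := Module.End ℂ A) _ _, LinearMap.pow_mulLeft, pow_vanish hB hki]
    simp

lemma mul_pow_expand (B T : A) (n : ℕ) :
    T * B ^ n = ∑ i ∈ Finset.range (n + 1),
      (n.choose i : ℂ) • (B ^ i * ((opK B) ^ (n - i)) T) := by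
  have hLR : Commute (LinearMap.mulLeft ℂ B) (LinearMap.mulRight ℂ B) :=
    LinearMap.commute_mulLeft_right B B
  have hcom : Commute (LinearMap.mulLeft ℂ B) (opK B) := by
    rw [opK]; exact hLR.sub_right (Commute.refl _)
  have hsum : LinearMap.mulLeft ℂ B + opK B = LinearMap.mulRight ℂ B := by
    rw [opK]; abel
  have h1 : T * B ^ n = ((LinearMap.mulRight ℂ B) ^ n) T := by
    rw [LinearMap.pow_mulRight, LinearMap.mulRight_apply]
  rw [h1, ← hsum, hcom.add_pow, LinearMap.sum_apply]
  apply Finset.sum_congr rfl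
  intro i hi
  rw [Module.End.mul_apply, Module.End.mul_apply, Module.End.natCast_apply,
    LinearMap.map_smul_of_tower, LinearMap.pow_mulLeft, LinearMap.mulLeft_apply]
  rw [← Nat.cast_smul_eq_nsmul ℂ]
  exact mul_smul_comm _ _ _

/-- The key exponential commutation identity. -/
lemma key_identity (B T : A) (p m : ℕ) (hB : B ^ p = 0) (hm : 3 * p ≤ m) :
    T * (∑ k ∈ Finset.range m, (k.factorial : ℂ)⁻¹ • B ^ k)
      = (∑ k ∈ Finset.range m, (k.factorial : ℂ)⁻¹ • B ^ k) *
        (∑ k ∈ Finset.range m, (k.factorial : ℂ)⁻¹ • ((opK B) ^ k) T) := by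
  set g : ℕ → ℕ → A := fun i k =>
    ((i.factorial : ℂ)⁻¹ * (k.factorial : ℂ)⁻¹) • (B ^ i * ((opK B) ^ k) T) with hg
  have vanish : ∀ i k : ℕ, m ≤ i + k → g i k = 0 := by
    intro i k hik
    rcases le_or_gt p i with hpi | hpi
    · simp [hg, pow_vanish hB hpi]
    · have : 2 * p ≤ k := by omega
      simp [hg, opK_pow_vanish hB this]
  -- LHS
  have lhs_eq : T * (∑ k ∈ Finset.range m, (k.factorial : ℂ)⁻¹ • B ^ k)
      = ∑ n ∈ Finset.range m, ∑ i ∈ Finset.range (n + 1), g i (n - i) := by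
    rw [Finset.mul_sum]
    apply Finset.sum_congr rfl
    intro n _
    rw [mul_smul_comm, mul_pow_expand, Finset.smul_sum]
    apply Finset.sum_congr rfl
    intro i hi
    rw [smul_smul, coeff_eq (Nat.lt_succ_iff.mp (Finset.mem_range.mp hi))]
  -- RHS
  have rhs_eq : (∑ k ∈ Finset.range m, (k.factorial : ℂ)⁻¹ • B ^ k) *
        (∑ k ∈ Finset.range m, (k.factorial : ℂ)⁻¹ • ((opK B) ^ k) T)
      = ∑ i ∈ Finset.range m, ∑ k ∈ Finset.range m, g i k := by
    rw [Finset.sum_mul]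
    apply Finset.sum_congr rfl
    intro i _
    rw [Finset.mul_sum]
    apply Finset.sum_congr rfl
    intro k _
    rw [smul_mul_assoc, mul_smul_comm, smul_smul]
  rw [lhs_eq, rhs_eq]
  -- triangle vs square
  have tri : ∀ n ∈ Finset.range m, ∑ i ∈ Finset.range (n + 1), g i (n - i)
      = ∑ i ∈ Finset.range m, (if i ≤ n then g i (n - i) else 0) := by
    intro n hn
    have hn' := Finset.mem_range.mp hn
    rw [Finset.sum_ite, Finset.sum_const_zero, add_zero]
    apply Finset.sum_congr
    · ext a; simp [Finset.mem_range, Finset.mem_filter]; omega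
    · intros; rfl
  rw [Finset.sum_congr rfl tri, Finset.sum_comm]
  apply Finset.sum_congr rfl
  intro i hi
  have step1 : ∑ n ∈ Finset.range m, (if i ≤ n then g i (n - i) else 0)
      = ∑ n ∈ Finset.Ico i m, g i (n - i) := by
    rw [Finset.sum_ite, Finset.sum_const_zero, add_zero]
    apply Finset.sum_congr
    · ext n; simp [Finset.mem_filter, Finset.mem_range, Finset.mem_Ico]; omega
    · intros; rfl
  have step2 : ∑ n ∈ Finset.Ico i m, g i (n - i) = ∑ j ∈ Finset.range (m - i), g i j := by
    rw [Finset.sum_Ico_eq_sum_range]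
    apply Finset.sum_congr rfl
    intro j _
    congr 1
    omega
  have step3 : ∑ j ∈ Finset.range (m - i), g i j = ∑ k ∈ Finset.range m, g i k := by
    apply Finset.sum_subset
    · apply Finset.range_subset_range.mpr; omega
    · intro k _ hk
      exact vanish i k (by simp [Finset.mem_range] at hk ⊢; omega)
  rw [step1, step2, step3]

end ExpRing

lemma expNil_eq_sum {M : Type*} [AddCommGroup M] [Module ℂ M] (A : Module.End ℂ M)
    (hA : IsNilpotent A) {m : ℕ} (hm : nilpotencyClass A ≤ m) :
    expNil A = ∑ k ∈ Finset.range m, (k.factorial : ℂ)⁻¹ • A ^ k := by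
  rw [expNil]
  apply Finset.sum_subset (Finset.range_subset_range.mpr hm)
  intro k _ hk
  have hck : nilpotencyClass A ≤ k := by
    simp only [Finset.mem_range, not_lt] at hk; exact hk
  rw [pow_vanish (pow_nilpotencyClass hA) hck, smul_zero]

lemma brkt {g : Type*} [LieRing g] [LieAlgebra ℂ g] (b : Module.Basis (Fin 4 ⊕ F4all) ℂ g)
    (N : F4all → F4all → ℂ)
    (hNbr : ∀ γ δ : F4all, ∀ h : (γ : E4) + δ ∈ F4all,
      ⁅b (Sum.inr γ), b (Sum.inr δ)⁆ = N γ δ • b (Sum.inr ⟨(γ : E4) + δ, h⟩))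
    (hzero : ∀ γ δ : F4all, (γ : E4) + (δ : E4) ∉ F4all → (γ : E4) + (δ : E4) ≠ 0 →
      ⁅b (Sum.inr γ), b (Sum.inr δ)⁆ = 0)
    {n : Type*} [LieRing n] [LieAlgebra ℂ n] (e : Module.Basis F4pos ℂ n)
    (ι : n →ₗ⁅ℂ⁆ g) (hinj : Function.Injective ι)
    (hιe : ∀ γ : F4pos, ι (e γ) = b (Sum.inr ⟨(γ : E4), Or.inl γ.2⟩))
    (γ δ : F4pos) :
    ⁅e γ, e δ⁆ = 0 ∨ ∃ (h : (γ : E4) + (δ : E4) ∈ F4pos) (c : ℂ),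
      ⁅e γ, e δ⁆ = c • e ⟨(γ : E4) + (δ : E4), h⟩ := by
  by_cases hall : (γ : E4) + (δ : E4) ∈ F4all
  · right
    have hpos : (γ : E4) + (δ : E4) ∈ F4pos := F4pos_of_mem_all γ.2 δ.2 hall
    refine ⟨hpos, N ⟨(γ : E4), Or.inl γ.2⟩ ⟨(δ : E4), Or.inl δ.2⟩, ?_⟩
    apply hinj
    have hsub : (⟨(γ : E4) + (δ : E4), hall⟩ : F4all)
        = ⟨(γ : E4) + (δ : E4), Or.inl hpos⟩ := Subtype.ext rfl
    rw [LieHom.map_lie, hιe, hιe, hNbr _ _ hall, map_smul, hιe, hsub]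
  · left
    apply hinj
    rw [LieHom.map_lie, hιe, hιe, map_zero]
    exact hzero _ _ hall (F4pos_sum_ne_zero γ.2 δ.2)

end Stmt16Aux

open Stmt16Aux in
theorem stmt16
    -- the simple complex Lie algebra `𝔤` of type `F₄`, with a Chevalley-type basis
    -- `{h₁,…,h₄} ∪ {e_γ : γ ∈ F₄}`: here `h i = b (Sum.inl i)` and `e_γ = b (Sum.inr γ)`
    {g : Type*} [LieRing g] [LieAlgebra ℂ g]
    (b : Module.Basis (Fin 4 ⊕ F4all) ℂ g)
    (hHH : ∀ i j : Fin 4, ⁅b (Sum.inl i), b (Sum.inl j)⁆ = 0)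
    (hHE : ∀ (i : Fin 4) (γ : F4all), ⁅b (Sum.inl i), b (Sum.inr γ)⁆ =
      ((2 * ⟪(γ : EuclideanSpace ℝ (Fin 4)), sroot i⟫ / ⟪sroot i, sroot i⟫ : ℝ) : ℂ) •
        b (Sum.inr γ))
    (N : F4all → F4all → ℂ)
    (hNbr : ∀ γ δ : F4all, ∀ h : (γ : EuclideanSpace ℝ (Fin 4)) + δ ∈ F4all,
      ⁅b (Sum.inr γ), b (Sum.inr δ)⁆ =
        N γ δ • b (Sum.inr ⟨(γ : EuclideanSpace ℝ (Fin 4)) + δ, h⟩))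
    (hN0 : ∀ γ δ : F4all,
      (γ : EuclideanSpace ℝ (Fin 4)) + (δ : EuclideanSpace ℝ (Fin 4)) ∈ F4all → N γ δ ≠ 0)
    -- `[e_γ, e_{−γ}]` lies in the span of the `hᵢ` and acts on each `e_δ`
    -- by the scalar `2(δ,γ)/(γ,γ)`
    (hCart : ∀ γ : F4all, ∀ h : -(γ : EuclideanSpace ℝ (Fin 4)) ∈ F4all, ∃ t : Fin 4 → ℂ,
      ⁅b (Sum.inr γ), b (Sum.inr ⟨-(γ : EuclideanSpace ℝ (Fin 4)), h⟩)⁆ =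
        ∑ i, t i • b (Sum.inl i) ∧
      ∀ δ : F4all, ⁅∑ i, t i • b (Sum.inl i), b (Sum.inr δ)⁆ =
        ((2 * ⟪(δ : EuclideanSpace ℝ (Fin 4)), (γ : EuclideanSpace ℝ (Fin 4))⟫ /
            ⟪(γ : EuclideanSpace ℝ (Fin 4)), (γ : EuclideanSpace ℝ (Fin 4))⟫ : ℝ) : ℂ) •
          b (Sum.inr δ))
    (hzero : ∀ γ δ : F4all,
      (γ : EuclideanSpace ℝ (Fin 4)) + (δ : EuclideanSpace ℝ (Fin 4)) ∉ F4all →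
      (γ : EuclideanSpace ℝ (Fin 4)) + (δ : EuclideanSpace ℝ (Fin 4)) ≠ 0 →
      ⁅b (Sum.inr γ), b (Sum.inr δ)⁆ = 0)
    -- `𝔫 = span{e_γ : γ ∈ F₄⁺}` is the nilpotent subalgebra of `𝔤` spanned by the
    -- positive root vectors; we realize it as a Lie algebra `n` with basis `(e_γ)_{γ∈F₄⁺}`
    -- embedded in `𝔤` via `ι`
    {n : Type*} [LieRing n] [LieAlgebra ℂ n]
    (e : Module.Basis F4pos ℂ n)
    (ι : n →ₗ⁅ℂ⁆ g) (hinj : Function.Injective ι)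
    (hιe : ∀ γ : F4pos,
      ι (e γ) = b (Sum.inr ⟨(γ : EuclideanSpace ℝ (Fin 4)), Or.inl γ.2⟩))
    (hnil : ∀ x : n, IsNilpotent (LieAlgebra.ad ℂ n x))
    (D : Finset F4pos)
    -- `D` is a non-singular rook placement
    (hrook : ∀ γ ∈ D, ∀ δ ∈ D, (γ : EuclideanSpace ℝ (Fin 4)) ≠ δ →
      ⟪(γ : EuclideanSpace ℝ (Fin 4)), (δ : EuclideanSpace ℝ (Fin 4))⟫ ≤ 0)
    (hns : ∀ γ ∈ D, ∀ δ ∈ D, (γ : EuclideanSpace ℝ (Fin 4)) ≠ δ →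
      (γ : EuclideanSpace ℝ (Fin 4)) - (δ : EuclideanSpace ℝ (Fin 4)) ∉ F4pos)
    (β₀ : F4pos) (hβ₀D : β₀ ∈ D)
    -- a simple root `α₀ = sroot i₀` with `(α₀,β₀) ≠ 0` and `(α₀,β) = 0`
    -- for every `β ∈ D ∖ {β₀}` with `β ≮ β₀`
    (i₀ : Fin 4)
    (hα₀β₀ : ⟪sroot i₀, (β₀ : EuclideanSpace ℝ (Fin 4))⟫ ≠ 0)
    (hα₀ : ∀ β ∈ D, β ≠ β₀ →
      ¬ rootLT (β : EuclideanSpace ℝ (Fin 4)) (β₀ : EuclideanSpace ℝ (Fin 4)) →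
      ⟪sroot i₀, (β : EuclideanSpace ℝ (Fin 4))⟫ = 0)
    (ξ₁ ξ₂ : F4pos → ℂ)
    (hξ₁ : ∀ γ ∈ D, ξ₁ γ ≠ 0) (hξ₂ : ∀ γ ∈ D, ξ₂ γ ≠ 0)
    (hξβ₀ : ξ₁ β₀ ≠ ξ₂ β₀) :
    orbitOf (∑ γ ∈ D, ξ₁ γ • e.coord γ) ≠ orbitOf (∑ γ ∈ D, ξ₂ γ • e.coord γ) := by
  intro horb
  classical
  set f₁ : Module.Dual ℂ n := ∑ γ ∈ D, ξ₁ γ • e.coord γ with hf1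
  set f₂ : Module.Dual ℂ n := ∑ γ ∈ D, ξ₂ γ • e.coord γ with hf2
  -- nontriviality
  have γ0 : F4pos := ⟨eps 0, Or.inl ⟨0, rfl⟩⟩
  haveI : Nontrivial n := ⟨e γ0, 0, e.ne_zero γ0⟩
  -- basic evaluation
  have fval : ∀ (ξ : F4pos → ℂ) (μ : F4pos),
      (∑ γ ∈ D, ξ γ • e.coord γ) (e μ) = if μ ∈ D then ξ μ else 0 := by
    intro ξ μ
    simp only [LinearMap.coe_sum, Finset.sum_apply, LinearMap.smul_apply, Module.Basis.coord_apply,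
      Module.Basis.repr_self, Finsupp.single_apply, smul_eq_mul, mul_ite, mul_one, mul_zero]
    exact Finset.sum_ite_eq D μ ξ
  have hbr := brkt b N hNbr hzero e ι hinj hιe
  -- the subspace spanned by root vectors strictly above β₀
  set V : Submodule ℂ n := Submodule.span ℂ
    {v | ∃ μ : F4pos, rootLT (β₀ : E4) (μ : E4) ∧ v = e μ} with hV
  have hbrV : ∀ (z : n) (δ : F4pos),
      ((δ : E4) = (β₀ : E4) ∨ rootLT (β₀ : E4) (δ : E4)) → ⁅z, e δ⁆ ∈ V := by
    intro z δ hδ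
    have hz : z ∈ Submodule.span ℂ (Set.range e) := by rw [e.span_eq]; exact Submodule.mem_top
    induction hz using Submodule.span_induction with
    | mem y hy =>
      obtain ⟨γ, rfl⟩ := hy
      rcases hbr γ δ with h0 | ⟨hpos, c, hc⟩
      · rw [h0]; exact V.zero_mem
      · rw [hc]
        apply V.smul_mem
        apply Submodule.subset_span
        refine ⟨⟨_, hpos⟩, ?_, rfl⟩
        rcases hδ with h | h
        · show rootLT (β₀ : E4) ((γ : E4) + (δ : E4))
          rw [← h]
          exact rootLT_add_left γ.2
        · exact rootLT_trans_add γ.2 h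
    | zero => rw [zero_lie]; exact V.zero_mem
    | add y z' hy hz' ihy ihz => rw [add_lie]; exact V.add_mem ihy ihz
    | smul a y hy ih => rw [smul_lie]; exact V.smul_mem a ih
  have hVcl : ∀ (z : n) (v : n), v ∈ V → ⁅z, v⁆ ∈ V := by
    intro z v hv
    induction hv using Submodule.span_induction with
    | mem y hy => obtain ⟨μ, hμ, rfl⟩ := hy; exact hbrV z μ (Or.inr hμ)
    | zero => rw [lie_zero]; exact V.zero_mem
    | add y z' hy hz' ihy ihz => rw [lie_add]; exact V.add_mem ihy ihz
    | smul a y hy ih => rw [lie_smul]; exact V.smul_mem a ih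
  -- obtain the element x with f₂ = f₁ ∘ exp(-ad x)
  have had0 : LieAlgebra.ad ℂ n (0 : n) = 0 := (LieAlgebra.ad ℂ n).map_zero
  have hexp0 : expNil (-(LieAlgebra.ad ℂ n (0 : n))) = 1 := by
    rw [had0, neg_zero, expNil, nilpotencyClass_zero]
    simp
  have h2mem : f₂ ∈ orbitOf f₁ := by
    rw [horb]
    exact ⟨0, by rw [hexp0, Module.End.one_eq_id, LinearMap.comp_id]⟩
  obtain ⟨x, hx⟩ := h2mem
  -- set up exponential data
  set B : Module.End ℂ n := -(LieAlgebra.ad ℂ n x) with hB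
  obtain ⟨q, hq⟩ := hnil x
  have hBq : B ^ q = 0 := by rw [hB, neg_pow, hq, mul_zero]
  have hq1 : 1 ≤ q := by
    rcases Nat.eq_zero_or_pos q with h | h
    · exfalso
      rw [h, pow_zero] at hq
      exact one_ne_zero hq
    · exact h
  have hnB : IsNilpotent B := ⟨q, hBq⟩
  set m : ℕ := max (nilpotencyClass B) (3 * q) with hm
  have hm3 : 3 * q ≤ m := le_max_right _ _
  have hmc : nilpotencyClass B ≤ m := le_max_left _ _
  have hm1 : 1 ≤ m := by omega
  set Ex : Module.End ℂ n := ∑ k ∈ Finset.range m, (k.factorial : ℂ)⁻¹ • B ^ k with hEx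
  have hexpE : expNil B = Ex := expNil_eq_sum B hnB hmc
  -- the weight operator φ
  set w : F4pos → ℝ := fun μ => ⟪sroot i₀, (μ : E4)⟫ with hw
  set φ : Module.End ℂ n := e.constr ℂ (fun μ => ((w μ : ℝ) : ℂ) • e μ) with hφdef
  have hφ : ∀ μ : F4pos, φ (e μ) = ((w μ : ℝ) : ℂ) • e μ := fun μ => e.constr_basis ℂ _ μ
  -- φ is a derivation
  have der1 : ∀ γ δ : F4pos, φ ⁅e γ, e δ⁆ = ⁅φ (e γ), e δ⁆ + ⁅e γ, φ (e δ)⁆ := by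
    intro γ δ
    rcases hbr γ δ with h0 | ⟨hpos, c, hc⟩
    · rw [h0, map_zero, hφ, hφ, smul_lie, lie_smul, h0, smul_zero, smul_zero, add_zero]
    · rw [hc, map_smul, hφ, hφ, hφ, smul_lie, lie_smul, hc, smul_smul, smul_smul, smul_smul,
        ← add_smul]
      congr 1
      have hwadd : w ⟨(γ : E4) + (δ : E4), hpos⟩ = w γ + w δ := by
        simp only [hw]
        exact inner_add_right _ _ _
      rw [hwadd]
      push_cast
      ring
  have der2 : ∀ (y : n) (δ : F4pos), φ ⁅y, e δ⁆ = ⁅φ y, e δ⁆ + ⁅y, φ (e δ)⁆ := by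
    intro y δ
    have hy : y ∈ Submodule.span ℂ (Set.range e) := by rw [e.span_eq]; exact Submodule.mem_top
    induction hy using Submodule.span_induction with
    | mem y' hy' => obtain ⟨γ, rfl⟩ := hy'; exact der1 γ δ
    | zero => simp
    | add y' z' hy' hz' ihy ihz =>
      rw [add_lie, map_add, ihy, ihz, map_add, add_lie, add_lie]
      abel
    | smul a y' hy' ih =>
      rw [smul_lie, map_smul, ih, map_smul, smul_lie, smul_lie, smul_add]
  have der : ∀ y v : n, φ ⁅y, v⁆ = ⁅φ y, v⁆ + ⁅y, φ v⁆ := by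
    intro y v
    have hv : v ∈ Submodule.span ℂ (Set.range e) := by rw [e.span_eq]; exact Submodule.mem_top
    induction hv using Submodule.span_induction with
    | mem v' hv' => obtain ⟨δ, rfl⟩ := hv'; exact der2 y δ
    | zero => simp
    | add y' z' hy' hz' ihy ihz =>
      rw [lie_add, map_add, ihy, ihz, map_add, lie_add, lie_add]
      abel
    | smul a y' hy' ih =>
      rw [lie_smul, map_smul, ih, map_smul, lie_smul, lie_smul, smul_add]
  -- commutator computations
  have hBapp : ∀ v : n, B v = -⁅x, v⁆ := by
    intro v
    rw [hB, LinearMap.neg_apply, LieAlgebra.ad_apply]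
  have hKφ : opK B φ = LieAlgebra.ad ℂ n (-(φ x)) := by
    ext v
    simp only [opK, LinearMap.sub_apply, LinearMap.mulRight_apply, LinearMap.mulLeft_apply,
      Module.End.mul_apply, LieAlgebra.ad_apply]
    rw [hBapp, hBapp, map_neg, der x v, neg_lie]
    abel
  have hKad : ∀ z : n, opK B (LieAlgebra.ad ℂ n z) = LieAlgebra.ad ℂ n ⁅x, z⁆ := by
    intro z
    ext v
    simp only [opK, LinearMap.sub_apply, LinearMap.mulRight_apply, LinearMap.mulLeft_apply,
      Module.End.mul_apply, LieAlgebra.ad_apply]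
    rw [hBapp, hBapp, lie_neg, leibniz_lie x z v]
    abel
  -- the sequence cₖ
  set cseq : ℕ → n := fun k => ((LieAlgebra.ad ℂ n x) ^ k) (-(φ x)) with hcseq
  have hKpow : ∀ k, ((opK B) ^ (k + 1)) φ = LieAlgebra.ad ℂ n (cseq k) := by
    intro k
    induction k with
    | zero =>
      rw [pow_one, hKφ]
      have h0 : cseq 0 = -(φ x) := by simp [hcseq]
      rw [h0]
    | succ k ih =>
      have h1 : ((opK B) ^ (k + 2)) φ = opK B (((opK B) ^ (k + 1)) φ) := by
        rw [pow_succ']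
        rfl
      rw [h1, ih, hKad]
      congr 1
      have : cseq (k + 1) = ⁅x, cseq k⁆ := by
        simp only [hcseq]
        rw [pow_succ']
        simp [LieAlgebra.ad_apply]
      rw [this]
  -- the element u with ψ = φ + ad u
  set u : n := ∑ k ∈ Finset.range (m - 1), (((k + 1).factorial : ℂ))⁻¹ • cseq k with hu
  have hψ : ∑ k ∈ Finset.range m, (k.factorial : ℂ)⁻¹ • ((opK B) ^ k) φ
      = φ + LieAlgebra.ad ℂ n u := by
    obtain ⟨m', hm'⟩ : ∃ m', m = m' + 1 := ⟨m - 1, by omega⟩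
    rw [hm', Finset.sum_range_succ']
    have h0 : (Nat.factorial 0 : ℂ)⁻¹ • ((opK B) ^ 0) φ = φ := by
      simp
    rw [h0]
    have hadu : LieAlgebra.ad ℂ n u
        = ∑ k ∈ Finset.range m', (((k + 1).factorial : ℂ))⁻¹ • LieAlgebra.ad ℂ n (cseq k) := by
      have hm'' : m - 1 = m' := by omega
      rw [hu, hm'']
      ext v
      simp [sum_lie, smul_lie]
    rw [hadu, add_comm]
    congr 1
    apply Finset.sum_congr rfl
    intro k _
    rw [hKpow k]
  -- the key identity
  have hkey : φ * Ex = Ex * (φ + LieAlgebra.ad ℂ n u) := by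
    rw [hEx, ← hψ]
    exact key_identity B φ q m hBq hm3
  -- Ex (e β₀) = e β₀ + R with R ∈ V
  have hpowV : ∀ k, (B ^ (k + 1)) (e β₀) ∈ V := by
    intro k
    induction k with
    | zero =>
      rw [pow_one, hBapp]
      exact V.neg_mem (hbrV x β₀ (Or.inl rfl))
    | succ k ih =>
      have h1 : (B ^ (k + 2)) (e β₀) = B ((B ^ (k + 1)) (e β₀)) := by
        rw [pow_succ']
        rfl
      rw [h1, hBapp]
      exact V.neg_mem (hVcl x _ ih)
  obtain ⟨R, hRV, hExe⟩ : ∃ R ∈ V, Ex (e β₀) = e β₀ + R := by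
    obtain ⟨m', hm'⟩ : ∃ m', m = m' + 1 := ⟨m - 1, by omega⟩
    refine ⟨∑ k ∈ Finset.range m', ((k + 1).factorial : ℂ)⁻¹ • (B ^ (k + 1)) (e β₀), ?_, ?_⟩
    · exact Submodule.sum_mem V fun k _ => V.smul_mem _ (hpowV k)
    · rw [hEx]
      rw [LinearMap.sum_apply]
      rw [hm', Finset.sum_range_succ']
      simp only [LinearMap.smul_apply]
      rw [add_comm]
      congr 1
      simp
  -- vanishing of f₁ ∘ φ on V
  have hf1φV : ∀ v ∈ V, f₁ (φ v) = 0 := by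
    intro v hv
    induction hv using Submodule.span_induction with
    | mem y hy =>
      obtain ⟨μ, hlt, rfl⟩ := hy
      rw [hφ, map_smul, hf1, fval ξ₁ μ, smul_eq_mul]
      by_cases hD : μ ∈ D
      · have hne : μ ≠ β₀ := by
          intro hc
          exact hlt.2 (by rw [hc])
        have hz := hα₀ μ hD hne (rootLT_asymm hlt)
        rw [if_pos hD]
        have : w μ = 0 := hz
        rw [this]
        simp
      · rw [if_neg hD, mul_zero]
    | zero => simp
    | add y z' hy hz' ihy ihz => rw [map_add, map_add, ihy, ihz, add_zero]
    | smul a y hy ih => rw [map_smul, map_smul, ih, smul_zero]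
  -- vanishing of f₂ on brackets with e β₀
  have hf2br : ∀ z : n, f₂ ⁅z, e β₀⁆ = 0 := by
    intro z
    have hz : z ∈ Submodule.span ℂ (Set.range e) := by rw [e.span_eq]; exact Submodule.mem_top
    induction hz using Submodule.span_induction with
    | mem y hy =>
      obtain ⟨γ, rfl⟩ := hy
      rcases hbr γ β₀ with h0 | ⟨hpos, c, hc⟩
      · rw [h0, map_zero]
      · rw [hc, map_smul, hf2, fval ξ₂ _, smul_eq_mul]
        set μs : F4pos := ⟨(γ : E4) + (β₀ : E4), hpos⟩ with hμs
        by_cases hD : μs ∈ D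
        · exfalso
          have hvne : (μs : E4) ≠ (β₀ : E4) := by
            intro hc'
            have h1 : phi ((γ : E4) + (β₀ : E4)) = phi (β₀ : E4) := by
              rw [show ((γ : E4) + (β₀ : E4)) = (μs : E4) from rfl, hc']
            rw [phi_add] at h1
            have := phi_pos γ.2
            linarith
          have hns' := hns μs hD β₀ hβ₀D hvne
          apply hns'
          have : (μs : E4) - (β₀ : E4) = (γ : E4) := by
            simp [hμs]
          rw [this]
          exact γ.2
        · rw [if_neg hD, mul_zero]
    | zero => rw [zero_lie, map_zero]
    | add y z' hy hz' ihy ihz => rw [add_lie, map_add, ihy, ihz, add_zero]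
    | smul a y hy ih => rw [smul_lie, map_smul, ih, smul_zero]
  -- final computation
  have hfeq : ∀ v : n, f₂ v = f₁ (Ex v) := by
    intro v
    rw [hx]
    rw [LinearMap.comp_apply, hexpE]
  have hval1 : f₁ ((φ * Ex) (e β₀)) = (w β₀ : ℂ) * ξ₁ β₀ := by
    rw [Module.End.mul_apply, hExe, map_add, map_add, hφ, map_smul, hf1, fval ξ₁ β₀,
      if_pos hβ₀D, hf1φV R hRV, add_zero, smul_eq_mul]
  have hval2 : f₁ ((Ex * (φ + LieAlgebra.ad ℂ n u)) (e β₀)) = (w β₀ : ℂ) * ξ₂ β₀ := by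
    rw [Module.End.mul_apply, ← hfeq]
    rw [LinearMap.add_apply, map_add, LieAlgebra.ad_apply, hf2br u, add_zero, hφ, map_smul,
      hf2, fval ξ₂ β₀, if_pos hβ₀D, smul_eq_mul]
  have : (w β₀ : ℂ) * ξ₁ β₀ = (w β₀ : ℂ) * ξ₂ β₀ := by
    rw [← hval1, ← hval2, hkey]
  have hw0 : (w β₀ : ℂ) ≠ 0 := by
    simp only [hw]
    exact_mod_cast Complex.ofReal_ne_zero.mpr hα₀β₀
  exact hξβ₀ (mul_left_cancel₀ hw0 this)
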